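/- arXiv:2502.16883 — 3 statements merged into one kernel-verified Lean document; each statement's English description precedes it below -/
import Mathlib

section
/- The distribution ρ_n ∝ sin^p(π(n+1)/(D+1)) on n ∈ {0,...,D-1} is the stationary distribution of the birth-death chain with birth rate (G̃_{n+1})² from state n to n+1 and death rate (L̃_n)² from state n to n-1: that is, for all 0 < n < D-1, (G̃_n)² ρ_{n-1} + (L̃_{n+1})² ρ_{n+1} = [(G̃_{n+1})² + (L̃_n)²] ρ_n, together with the boundary balance conditions at n = 0 and n = D-1. -/
open Real Finset

lemma key_bal (a b p lam : ℝ) (ha : 0 < a) (hb : 0 < b) :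
    ((b / a) ^ (p * lam / 2)) ^ 2 * a ^ p
      = ((a / b) ^ (p * (1 - lam) / 2)) ^ 2 * b ^ p := by
  have hab : (0:ℝ) ≤ b / a := le_of_lt (div_pos hb ha)
  have hba : (0:ℝ) ≤ a / b := le_of_lt (div_pos ha hb)
  rw [← Real.rpow_natCast ((b/a) ^ (p*lam/2)) 2, ← Real.rpow_mul hab,
      ← Real.rpow_natCast ((a/b) ^ (p*(1-lam)/2)) 2, ← Real.rpow_mul hba]
  push_cast
  rw [Real.div_rpow hb.le ha.le, Real.div_rpow ha.le hb.le]
  have ha' := Real.rpow_pos_of_pos ha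
  have hb' := Real.rpow_pos_of_pos hb
  field_simp
  rw [mul_right_comm, ← Real.rpow_add hb, mul_assoc, ← mul_assoc, ← Real.rpow_add ha]
  have e1 : p * lam + p * (1 - lam) = p := by ring
  have e2 : p * (1 - lam) + p * lam = p := by ring
  rw [e1, mul_comm]

/-- The distribution `ρ_n ∝ sin^p (π(n+1)/(D+1))` is stationary for the birth-death
chain with birth rates `(G̃_{n+1})²` and death rates `(L̃_n)²`: full balance in the
bulk together with the boundary balance conditions at `n = 0` and `n = D-1`. -/
theorem stmt_1 (D : ℕ) (hD : 2 ≤ D) (p lam : ℝ) (hp : 0 < p)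
    (G L ρ : ℕ → ℝ)
    (hG : ∀ n, 1 ≤ n → n ≤ D - 1 →
      G n = (Real.sin (π * (n + 1) / (D + 1)) / Real.sin (π * n / (D + 1))) ^ (p * lam / 2))
    (hGD : G D = 0)
    (hL : ∀ n, 1 ≤ n → n ≤ D - 1 →
      L n = (Real.sin (π * n / (D + 1)) / Real.sin (π * (n + 1) / (D + 1))) ^ (p * (1 - lam) / 2))
    (hL0 : L 0 = 0)
    (hρ : ∀ n, n < D →
      ρ n = Real.sin (π * (n + 1) / (D + 1)) ^ p /
        ∑ m ∈ Finset.range D, Real.sin (π * (m + 1) / (D + 1)) ^ p) :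
    (∀ n, 0 < n → n < D - 1 →
      (G n) ^ 2 * ρ (n - 1) + (L (n + 1)) ^ 2 * ρ (n + 1) =
        ((G (n + 1)) ^ 2 + (L n) ^ 2) * ρ n) ∧
    (L 1) ^ 2 * ρ 1 = (G 1) ^ 2 * ρ 0 ∧
    (G (D - 1)) ^ 2 * ρ (D - 2) = (L (D - 1)) ^ 2 * ρ (D - 1) := by
  set Z := ∑ m ∈ Finset.range D, Real.sin (π * (m + 1) / (D + 1)) ^ p with hZ
  -- positivity of the sines
  have hsin : ∀ n : ℕ, 1 ≤ n → n ≤ D → 0 < Real.sin (π * n / (D + 1)) := by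
    intro n h1 h2
    apply Real.sin_pos_of_pos_of_lt_pi
    · apply div_pos
      · positivity
      · positivity
    · rw [div_lt_iff₀ (by positivity)]
      have : (n : ℝ) < (D : ℝ) + 1 := by exact_mod_cast Nat.lt_succ_of_le h2
      nlinarith [Real.pi_pos]
  -- detailed balance
  have db : ∀ n, 1 ≤ n → n ≤ D - 1 →
      (G n) ^ 2 * ρ (n - 1) = (L n) ^ 2 * ρ n := by
    intro n h1 h2
    have hn1 : n - 1 < D := by omega
    have hnD : n < D := by omega
    have hcast : ((n - 1 : ℕ) : ℝ) + 1 = (n : ℝ) := by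
      rw [Nat.cast_sub h1]; push_cast; ring
    have ha : 0 < Real.sin (π * n / (D + 1)) := hsin n h1 (by omega)
    have hb : 0 < Real.sin (π * (n + 1) / (D + 1)) := by
      have := hsin (n + 1) (by omega) (by omega)
      push_cast at this ⊢
      exact this
    rw [hρ _ hn1, hρ _ hnD, hG n h1 h2, hL n h1 h2, hcast]
    rw [← mul_div_assoc, ← mul_div_assoc, key_bal _ _ p lam ha hb]
  refine ⟨?_, ?_, ?_⟩
  · intro n hn0 hn
    have h1 := db n (by omega) (by omega)
    have h2 := db (n + 1) (by omega) (by omega)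
    simp only [Nat.add_sub_cancel] at h2
    rw [h1, ← h2]; ring
  · exact (db 1 le_rfl (by omega)).symm
  · have h := db (D - 1) (by omega) (by omega)
    have : D - 1 - 1 = D - 2 := by omega
    rwa [this] at h
end

section
/- For the state ϱ^φ = Σ_{m,n} √(ρ_m ρ_n) e^{iφ(m-n)}|m⟩⟨n| with ρ supported on {0,...,D-1}, and the lowering operator L̂ = Σ_{l=1}^{D-1} √(ρ_{l-1}/ρ_l)|l-1⟩⟨l|, one has the exact identity L̂ ϱ^φ = e^{iφ}(ϱ^φ + ŝ) where ŝ = -Σ_{n=0}^{D-1} √(ρ_{D-1}ρ_n) e^{i(D-1-n)φ}|D-1⟩⟨n|, and the Hilbert-Schmidt norm satisfies ‖ŝ‖ = √ρ_{D-1}. -/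
open Real Complex Finset

/-- The pure phase state `ϱ^φ = Σ √(ρ_m ρ_n) e^{iφ(m-n)}|m⟩⟨n|` is an approximate
eigenstate of the weighted lowering operator `L̂ = Σ √(ρ_{l-1}/ρ_l)|l-1⟩⟨l|`:
`L̂ ϱ^φ = e^{iφ}(ϱ^φ + ŝ)` exactly, where `ŝ` is supported on the top row
`m = D-1` with `ŝ_{D-1,n} = -√(ρ_{D-1}ρ_n) e^{iφ(D-1-n)}`, and the
Hilbert–Schmidt norm of `ŝ` equals `√ρ_{D-1}`. -/
theorem stmt_17 (D : ℕ) (hD : 0 < D) (ρ : Fin D → ℝ)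
    (hρpos : ∀ n, 0 < ρ n) (hρsum : ∑ n, ρ n = 1) (φ : ℝ)
    (ϱ L s : Matrix (Fin D) (Fin D) ℂ)
    (hϱ : ∀ m n, ϱ m n = (Real.sqrt (ρ m * ρ n) : ℝ) *
      Complex.exp (Complex.I * φ * ((m : ℝ) - (n : ℝ))))
    (hL : ∀ i j, L i j =
      if (i : ℕ) + 1 = (j : ℕ) then ((Real.sqrt (ρ i / ρ j) : ℝ) : ℂ) else 0)
    (hs : ∀ m n, s m n =
      if (m : ℕ) = D - 1 then
        -((Real.sqrt (ρ m * ρ n) : ℝ) *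
          Complex.exp (Complex.I * φ * ((m : ℝ) - (n : ℝ))))
      else 0) :
    L * ϱ = Complex.exp (Complex.I * φ) • (ϱ + s) ∧
    Real.sqrt (∑ m, ∑ n, ‖s m n‖ ^ 2) =
      Real.sqrt (ρ ⟨D - 1, by omega⟩) := by
  constructor
  · ext m n
    rw [Matrix.mul_apply]
    by_cases hm : (m : ℕ) + 1 < D
    · have hmne : (m : ℕ) ≠ D - 1 := by omega
      have key : ∀ k : Fin D, L m k * ϱ k n =
          if k = (⟨(m : ℕ) + 1, hm⟩ : Fin D) then L m ⟨(m : ℕ) + 1, hm⟩ * ϱ ⟨(m : ℕ) + 1, hm⟩ n else 0 := by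
        intro k
        by_cases hk : k = (⟨(m : ℕ) + 1, hm⟩ : Fin D)
        · simp [hk]
        · have : (m : ℕ) + 1 ≠ (k : ℕ) := fun h => hk (Fin.ext h.symm)
          simp [hL, this, hk]
      rw [Finset.sum_congr rfl (fun k _ => key k), Finset.sum_ite_eq']
      simp only [Finset.mem_univ, if_true]
      simp only [Matrix.smul_apply, Matrix.add_apply]
      rw [hL, hϱ, hϱ, hs]
      simp only [hmne, if_false, if_pos rfl, if_true, add_zero, smul_eq_mul, Fin.val_mk]
      have h1 : Real.sqrt (ρ m / ρ ⟨(m:ℕ)+1, hm⟩) * Real.sqrt (ρ ⟨(m:ℕ)+1, hm⟩ * ρ n)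
          = Real.sqrt (ρ m * ρ n) := by
        rw [← Real.sqrt_mul (div_nonneg (hρpos m).le (hρpos _).le)]
        congr 1
        rw [div_mul_eq_mul_div, mul_comm (ρ ⟨(m:ℕ)+1, hm⟩), ← mul_assoc,
          mul_div_assoc, div_self (hρpos _).ne', mul_one]
      have key2 : ((Real.sqrt (ρ m / ρ ⟨(m:ℕ)+1, hm⟩) : ℝ) : ℂ) *
          ((Real.sqrt (ρ ⟨(m:ℕ)+1, hm⟩ * ρ n) : ℝ) : ℂ) = ((Real.sqrt (ρ m * ρ n) : ℝ) : ℂ) := by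
        rw [← Complex.ofReal_mul, h1]
      have hexp : Complex.exp (Complex.I * φ * ((((m:ℕ)+1 : ℕ) : ℝ) - ((n:ℕ) : ℝ)))
          = Complex.exp (Complex.I * φ) * Complex.exp (Complex.I * φ * (((m:ℕ) : ℝ) - ((n:ℕ) : ℝ))) := by
        rw [← Complex.exp_add]
        congr 1
        push_cast
        ring
      rw [← mul_assoc, key2, hexp]
      ring
    · have hmeq : (m : ℕ) = D - 1 := by omega
      have hz : ∀ k : Fin D, L m k * ϱ k n = 0 := by
        intro k
        have : (m : ℕ) + 1 ≠ (k : ℕ) := by omega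
        simp [hL, this]
      rw [Finset.sum_congr rfl (fun k _ => hz k), Finset.sum_const_zero]
      simp [hϱ, hs, hmeq]
  · congr 1
    have hsabs : ∀ m n : Fin D, ‖s m n‖ ^ 2 =
        if (m : ℕ) = D - 1 then ρ m * ρ n else 0 := by
      intro m n
      rw [hs]
      by_cases hm : (m : ℕ) = D - 1
      · rw [if_pos hm, if_pos hm]
        simp only [norm_neg, norm_mul]
        rw [Complex.norm_exp]
        have h0 : (Complex.I * φ * ((m : ℝ) - (n : ℝ))).re = 0 := by
          simp [Complex.mul_re, Complex.mul_im]
        rw [h0, Real.exp_zero, mul_one, Complex.norm_real, Real.norm_eq_abs,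
          _root_.abs_of_nonneg (Real.sqrt_nonneg _),
          Real.sq_sqrt (mul_nonneg (hρpos m).le (hρpos n).le)]
      · simp [hm]
    simp only [hsabs]
    have hmain : ∀ m : Fin D, (∑ n, if (m : ℕ) = D - 1 then ρ m * ρ n else 0)
        = if m = (⟨D - 1, by omega⟩ : Fin D) then ρ ⟨D - 1, by omega⟩ else 0 := by
      intro m
      by_cases hm : (m : ℕ) = D - 1
      · have hm' : m = (⟨D - 1, by omega⟩ : Fin D) := Fin.ext hm
        simp only [hm, if_true, hm', ← Finset.mul_sum, hρsum, mul_one]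
      · have : m ≠ (⟨D - 1, by omega⟩ : Fin D) := fun h => hm (by rw [h])
        simp [hm, this]
    rw [Finset.sum_congr rfl (fun m _ => hmain m), Finset.sum_ite_eq']
    simp
end

section
/- For ρ_n ∝ sin^p(π(n+1)/(D+1)) on {0,...,D-1}, the boundary weight satisfies ρ_{D-1} ~ π^{-1/2}·(π/(2μ))^{p+1}·Γ((2+p)/2)/Γ((1+p)/2) as μ = (D-1)/2 → ∞ with p fixed; in particular ρ_{D-1} = Θ(μ^{-(p+1)}). -/
open Real Finset Filter
open MeasureTheory intervalIntegral Set

lemma real_beta {u v : ℝ} (hu : 0 < u) (hv : 0 < v) :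
    ∫ x in (0:ℝ)..1, x ^ (u-1) * (1-x) ^ (v-1) =
      Real.Gamma u * Real.Gamma v / Real.Gamma (u+v) := by
  have h := Complex.Gamma_mul_Gamma_eq_betaIntegral (s := (u:ℂ)) (t := (v:ℂ))
    (by simpa using hu) (by simpa using hv)
  have hb : Complex.betaIntegral u v =
      ((∫ x in (0:ℝ)..1, x ^ (u-1) * (1-x) ^ (v-1) : ℝ) : ℂ) := by
    rw [Complex.betaIntegral, ← intervalIntegral.integral_ofReal]
    apply intervalIntegral.integral_congr
    intro x hx
    rw [Set.uIcc_of_le (by norm_num : (0:ℝ) ≤ 1)] at hx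
    obtain ⟨h0, h1⟩ := hx
    simp only []
    rw [show ((u:ℂ)-1) = ((u-1:ℝ):ℂ) by push_cast; ring,
      show ((v:ℂ)-1) = ((v-1:ℝ):ℂ) by push_cast; ring,
      show (1 - (x:ℂ)) = ((1-x:ℝ):ℂ) by push_cast; ring]
    rw [← Complex.ofReal_cpow h0, ← Complex.ofReal_cpow (by linarith : (0:ℝ) ≤ 1 - x)]
    push_cast
    ring
  have hΓ : Real.Gamma (u+v) ≠ 0 := (Real.Gamma_pos_of_pos (by linarith)).ne'
  rw [hb] at h
  have : ((Real.Gamma u * Real.Gamma v : ℝ) : ℂ) =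
      ((Real.Gamma (u+v) * ∫ x in (0:ℝ)..1, x ^ (u-1) * (1-x) ^ (v-1) : ℝ) : ℂ) := by
    push_cast [← Complex.Gamma_ofReal]
    exact_mod_cast h
  have := Complex.ofReal_inj.mp this
  field_simp [hΓ]
  linarith [this]

lemma beta_intble {q : ℝ} (hq : -1 < q) :
    IntervalIntegrable (fun t : ℝ => t ^ q * (1 - t) ^ q) volume 0 1 := by
  have h1 : IntervalIntegrable (fun t : ℝ => t ^ q * (1 - t) ^ q) volume 0 (1/2) := by
    apply (intervalIntegrable_rpow' hq).mul_continuousOn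
    apply ContinuousOn.rpow_const (by fun_prop)
    intro x hx
    rw [Set.uIcc_of_le (by norm_num : (0:ℝ) ≤ 1/2)] at hx
    left; intro h; nlinarith [hx.2]
  have h2 : IntervalIntegrable (fun t : ℝ => (1-t) ^ q * (1 - (1-t)) ^ q) volume (1-0) (1-1/2) :=
    h1.comp_sub_left 1
  have h2' : IntervalIntegrable (fun t : ℝ => t ^ q * (1 - t) ^ q) volume (1/2) 1 := by
    norm_num at h2
    have := h2.symm
    apply this.congr
    intro x _
    simp [mul_comm]
  exact h1.trans h2'

lemma sinp_cont {p : ℝ} (hp : 0 < p) : Continuous (fun θ : ℝ => Real.sin θ ^ p) :=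
  Real.continuous_sin.rpow_const (fun _ => Or.inr hp.le)

lemma I_val {p : ℝ} (hp : 0 < p) :
    ∫ θ in (0:ℝ)..π, Real.sin θ ^ p =
      Real.sqrt π * (Real.Gamma ((1+p)/2) / Real.Gamma ((2+p)/2)) := by
  set v : ℝ := (p+1)/2 with hv
  have hv0 : 0 < v := by positivity
  have hq : (-1:ℝ) < v - 1 := by simp [hv]; linarith
  set g : ℝ → ℝ := fun t => t ^ (v-1) * (1-t) ^ (v-1) with hg
  have hgint : IntervalIntegrable g volume 0 1 := beta_intble hq
  set G : ℝ → ℝ := fun y => ∫ t in (0:ℝ)..y, g t with hG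
  have hGcont : ContinuousOn G (Set.Icc 0 1) := by
    have := continuousOn_primitive_interval
      (a := (0:ℝ)) (b := 1) (f := g) (μ := volume) ?_
    · simpa [Set.uIcc_of_le (by norm_num : (0:ℝ) ≤ 1)] using this
    · rw [Set.uIcc_of_le (by norm_num : (0:ℝ) ≤ 1)]
      exact (intervalIntegrable_iff_integrableOn_Icc_of_le (by norm_num)).mp hgint
  set φ : ℝ → ℝ := fun θ => (1 + Real.cos θ)/2 with hφ
  have hφmem : ∀ θ : ℝ, φ θ ∈ Set.Icc (0:ℝ) 1 := by
    intro θ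
    constructor
    · have := Real.neg_one_le_cos θ; simp [hφ]; linarith
    · have := Real.cos_le_one θ; simp [hφ]; linarith
  -- key identity on (0, π/2)
  have key : ∀ a ∈ Set.Ioo (0:ℝ) (π/2),
      ∫ θ in a..(π-a), Real.sin θ ^ p = (2:ℝ)^p * (G (φ a) - G (φ (π-a))) := by
    intro a ha
    obtain ⟨ha0, ha2⟩ := ha
    have hπ : (0:ℝ) < π := Real.pi_pos
    have hab : a ≤ π - a := by linarith
    have hIcc : Set.uIcc a (π-a) = Set.Icc a (π-a) := Set.uIcc_of_le hab
    have hmem : ∀ θ ∈ Set.Icc a (π-a), Real.cos θ ∈ Set.Ioo (-1:ℝ) 1 := by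
      intro θ hθ
      have h1 : θ ∈ Set.Icc (0:ℝ) π := ⟨by linarith [hθ.1], by linarith [hθ.2]⟩
      constructor
      · calc (-1:ℝ) = Real.cos π := (Real.cos_pi).symm
          _ < Real.cos (π - a) := Real.strictAntiOn_cos ⟨by linarith, by linarith⟩
              ⟨hπ.le, le_refl _⟩ (by linarith)
          _ ≤ Real.cos θ := by
              rcases eq_or_lt_of_le hθ.2 with h | h
              · rw [h]
              · exact (Real.strictAntiOn_cos h1 ⟨by linarith, by linarith⟩ h).le
      · calc Real.cos θ ≤ Real.cos a := by
              rcases eq_or_lt_of_le hθ.1 with h | h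
              · rw [h]
              · exact (Real.strictAntiOn_cos ⟨ha0.le, by linarith⟩ h1 h).le
          _ < Real.cos 0 := Real.strictAntiOn_cos ⟨le_refl _, hπ.le⟩ ⟨ha0.le, by linarith⟩ ha0
          _ = 1 := Real.cos_zero
    have himg : φ '' Set.uIcc a (π-a) ⊆ Set.Ioo (0:ℝ) 1 := by
      rw [hIcc]
      rintro _ ⟨θ, hθ, rfl⟩
      obtain ⟨h1, h2⟩ := hmem θ hθ
      exact ⟨by simp [hφ]; linarith, by simp [hφ]; linarith⟩
    have hderiv : ∀ x ∈ Set.uIcc a (π-a), HasDerivAt φ (-Real.sin x / 2) x := by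
      intro x _
      simpa using ((Real.hasDerivAt_cos x).const_add 1).div_const 2
    have hgcont : ContinuousOn g (φ '' Set.uIcc a (π-a)) := by
      apply ContinuousOn.mono _ himg
      apply ContinuousOn.mul
      · exact ContinuousOn.rpow_const (by fun_prop) (fun x hx => Or.inl hx.1.ne')
      · exact ContinuousOn.rpow_const (by fun_prop)
          (fun x hx => Or.inl (by intro h; have := hx.2; linarith [sub_eq_zero.mp h]))
    have sub := integral_comp_smul_deriv' (a := a) (b := π - a)
      hderiv (by fun_prop) hgcont
    -- rewrite LHS integrand
    have hLHS : ∫ x in a..(π-a), (-Real.sin x / 2) • (g ∘ φ) x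
        = -(∫ θ in a..(π-a), Real.sin θ ^ p) / (2:ℝ)^p := by
      rw [← intervalIntegral.integral_neg, ← intervalIntegral.integral_div]
      apply intervalIntegral.integral_congr
      intro θ hθ
      rw [hIcc] at hθ
      have hsin : 0 < Real.sin θ :=
        Real.sin_pos_of_pos_of_lt_pi (by linarith [hθ.1]) (by linarith [hθ.2])
      have hs2 : (0:ℝ) < Real.sin θ / 2 := by linarith
      have hc := hmem θ hθ
      have e1 : φ θ = (1 + Real.cos θ)/2 := rfl
      have e2 : 1 - φ θ = (1 - Real.cos θ)/2 := by simp [hφ]; ring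
      have e3 : g (φ θ) = (Real.sin θ / 2) ^ (p - 1) := by
        rw [hg]
        simp only [e2]
        rw [e1, ← Real.mul_rpow (by linarith [hc.1]) (by linarith [hc.2])]
        have e4 : (1 + Real.cos θ)/2 * ((1 - Real.cos θ)/2) = (Real.sin θ / 2)^(2:ℕ) := by
          have := Real.sin_sq_add_cos_sq θ
          ring_nf
          nlinarith [this]
        rw [e4, ← Real.rpow_natCast (Real.sin θ / 2) 2, ← Real.rpow_mul hs2.le]
        norm_num
        congr 1
        simp [hv]; ring
      simp only [Function.comp, smul_eq_mul]
      rw [e3]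
      have e5 : -Real.sin θ / 2 * (Real.sin θ / 2) ^ (p-1)
          = -((Real.sin θ / 2) ^ ((p-1)+1)) := by
        rw [Real.rpow_add_one hs2.ne']
        ring
      rw [e5]
      norm_num
      rw [Real.div_rpow hsin.le (by norm_num : (0:ℝ) ≤ 2)]
      ring
    -- rewrite RHS
    have hRHS : ∫ u in φ a..φ (π - a), g u = -(G (φ a) - G (φ (π-a))) := by
      rw [intervalIntegral.integral_symm]
      have h1 : IntervalIntegrable g volume 0 (φ (π - a)) :=
        hgint.mono_set (by
          rw [Set.uIcc_of_le (hφmem _).1, Set.uIcc_of_le (by norm_num : (0:ℝ) ≤ 1)]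
          exact Set.Icc_subset_Icc le_rfl (hφmem _).2)
      have h2 : IntervalIntegrable g volume 0 (φ a) :=
        hgint.mono_set (by
          rw [Set.uIcc_of_le (hφmem _).1, Set.uIcc_of_le (by norm_num : (0:ℝ) ≤ 1)]
          exact Set.Icc_subset_Icc le_rfl (hφmem _).2)
      rw [← intervalIntegral.integral_interval_sub_left h2 h1]
    rw [hLHS, hRHS] at sub
    have h2p : (0:ℝ) < (2:ℝ)^p := Real.rpow_pos_of_pos (by norm_num) p
    field_simp at sub ⊢
    linarith [sub]
  -- now take limits
  have hπ : (0:ℝ) < π := Real.pi_pos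
  set F : ℝ → ℝ := fun x => ∫ θ in (0:ℝ)..x, Real.sin θ ^ p with hF
  have hFcont : Continuous F :=
    intervalIntegral.continuous_primitive
      (fun a b => ((sinp_cont hp).intervalIntegrable a b)) 0
  have hL1 : Tendsto (fun a => ∫ θ in a..(π-a), Real.sin θ ^ p) (nhdsWithin 0 (Set.Ioo 0 (π/2)))
      (nhds (∫ θ in (0:ℝ)..π, Real.sin θ ^ p)) := by
    have heq : ∀ a : ℝ, ∫ θ in a..(π-a), Real.sin θ ^ p = F (π - a) - F a := by
      intro a
      exact (intervalIntegral.integral_interval_sub_left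
        ((sinp_cont hp).intervalIntegrable _ _) ((sinp_cont hp).intervalIntegrable _ _)).symm
    simp only [heq]
    have t1 : Tendsto (fun a : ℝ => F (π - a)) (nhds 0) (nhds (F (π - 0))) :=
      (hFcont.tendsto _).comp ((continuous_const.sub continuous_id).tendsto 0)
    have t2 : Tendsto (fun a : ℝ => F a) (nhds 0) (nhds (F 0)) := hFcont.tendsto 0
    have hF0 : F 0 = 0 := intervalIntegral.integral_same
    have := t1.sub t2
    rw [hF0, sub_zero, sub_zero] at this
    have hFint : F π = ∫ θ in (0:ℝ)..π, Real.sin θ ^ p := rfl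
    rw [hFint] at this
    exact this.mono_left nhdsWithin_le_nhds
  have hL2 : Tendsto (fun a => (2:ℝ)^p * (G (φ a) - G (φ (π-a)))) (nhdsWithin 0 (Set.Ioo 0 (π/2)))
      (nhds ((2:ℝ)^p * (G 1 - G 0))) := by
    apply Tendsto.const_mul
    apply Tendsto.sub
    · have h1 : ContinuousWithinAt G (Set.Icc 0 1) 1 :=
        hGcont 1 ⟨by norm_num, le_rfl⟩
      apply h1.tendsto.comp
      rw [tendsto_nhdsWithin_iff]
      constructor
      · have hφc : Continuous φ := (continuous_const.add Real.continuous_cos).div_const 2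
        have t := hφc.tendsto 0
        have : φ 0 = 1 := by simp [hφ]
        rw [this] at t
        exact t.mono_left nhdsWithin_le_nhds
      · exact Filter.Eventually.of_forall (fun a => hφmem a)
    · have h0 : ContinuousWithinAt G (Set.Icc 0 1) 0 :=
        hGcont 0 ⟨le_rfl, by norm_num⟩
      apply h0.tendsto.comp
      rw [tendsto_nhdsWithin_iff]
      constructor
      · have hφc : Continuous φ := (continuous_const.add Real.continuous_cos).div_const 2
        have t := (hφc.tendsto (π - 0)).comp ((continuous_const.sub continuous_id).tendsto (0:ℝ))
        have h00 : φ (π - 0) = 0 := by simp [hφ]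
        rw [h00] at t
        exact t.mono_left nhdsWithin_le_nhds
      · exact Filter.Eventually.of_forall (fun a => hφmem _)
  have hne : (nhdsWithin (0:ℝ) (Set.Ioo 0 (π/2))).NeBot := by
    apply IsGLB.nhdsWithin_neBot
    · exact isGLB_Ioo (by linarith)
    · exact Set.nonempty_Ioo.mpr (by linarith)
  have heq : (fun a => ∫ θ in a..(π-a), Real.sin θ ^ p)
      =ᶠ[nhdsWithin 0 (Set.Ioo 0 (π/2))] (fun a => (2:ℝ)^p * (G (φ a) - G (φ (π-a)))) :=
    eventually_nhdsWithin_of_forall key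
  have hmain : (∫ θ in (0:ℝ)..π, Real.sin θ ^ p) = (2:ℝ)^p * (G 1 - G 0) :=
    tendsto_nhds_unique hL1 (hL2.congr' heq.symm)
  -- evaluate
  have hG0 : G 0 = 0 := intervalIntegral.integral_same
  have hG1 : G 1 = Real.Gamma v * Real.Gamma v / Real.Gamma (v + v) := by
    rw [hG]
    simpa using real_beta hv0 hv0
  rw [hmain, hG0, hG1, sub_zero]
  have hvv : v + v = p + 1 := by rw [hv]; ring
  have h1 : (1+p)/2 = v := by rw [hv]; ring
  have h2 : (2+p)/2 = v + 1/2 := by rw [hv]; ring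
  rw [hvv, h1, h2]
  have hdup := Real.Gamma_mul_Gamma_add_half v
  have h2v : 2 * v = p + 1 := by rw [hv]; ring
  rw [h2v] at hdup
  have hΓ1 : 0 < Real.Gamma v := Real.Gamma_pos_of_pos hv0
  have hΓ2 : 0 < Real.Gamma (v + 1/2) := Real.Gamma_pos_of_pos (by linarith)
  have hΓ3 : 0 < Real.Gamma (p + 1) := Real.Gamma_pos_of_pos (by linarith)
  have hexp : (2:ℝ) ^ (1 - (p+1)) * (2:ℝ)^p = 1 := by
    rw [← Real.rpow_add (by norm_num)]
    norm_num
  have hsq : (0:ℝ) < Real.sqrt π := Real.sqrt_pos.mpr hπ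
  have e : (2:ℝ)^p * (Real.Gamma v * Real.Gamma v) * Real.Gamma (v+1/2)
      = Real.sqrt π * Real.Gamma v * Real.Gamma (p+1) := by
    linear_combination ((2:ℝ)^p * Real.Gamma v) * hdup
      + (Real.Gamma (p+1) * Real.sqrt π * Real.Gamma v) * hexp
  rw [mul_div_assoc', mul_div_assoc', div_eq_div_iff hΓ3.ne' hΓ2.ne']
  linear_combination e

lemma riemann {f : ℝ → ℝ} (hf : Continuous f) {b : ℝ} (hb : 0 < b) :
    Tendsto (fun N : ℕ => (b / N) * ∑ k ∈ Finset.range N, f (b * (k+1) / N)) atTop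
      (nhds (∫ x in (0:ℝ)..b, f x)) := by
  rw [Metric.tendsto_atTop]
  intro ε hε
  have hUC : UniformContinuousOn f (Set.Icc 0 b) :=
    isCompact_Icc.uniformContinuousOn_of_continuous hf.continuousOn
  rw [Metric.uniformContinuousOn_iff] at hUC
  obtain ⟨δ, hδ, hUC⟩ := hUC (ε/(2*b)) (by positivity)
  obtain ⟨N₀, hN₀⟩ := exists_nat_gt (b/δ)
  refine ⟨max N₀ 1, fun N hN => ?_⟩
  have hN1 : 1 ≤ N := le_trans (le_max_right _ _) hN
  have hNpos : (0:ℝ) < N := by exact_mod_cast Nat.lt_of_lt_of_le Nat.zero_lt_one hN1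
  have hNN : (N₀:ℝ) ≤ N := Nat.cast_le.mpr (le_trans (le_max_left _ _) hN)
  have hsmall : b / N < δ := by
    rw [div_lt_iff₀ hNpos]
    calc b < N₀ * δ := by
          have := (div_lt_iff₀ hδ).mp (lt_of_lt_of_le hN₀ hNN)
          rw [div_lt_iff₀ hδ] at hN₀
          nlinarith
      _ ≤ δ * N := by nlinarith
  set a : ℕ → ℝ := fun k => b * k / N with ha
  have hint : ∀ k, IntervalIntegrable f volume (a k) (a (k+1)) :=
    fun k => hf.intervalIntegrable _ _
  have hsplit : ∑ k ∈ Finset.range N, ∫ x in (a k)..(a (k+1)), f x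
      = ∫ x in (a 0)..(a N), f x :=
    intervalIntegral.sum_integral_adjacent_intervals (fun k _ => hint k)
  have ha0 : a 0 = 0 := by simp [ha]
  have haN : a N = b := by simp only [ha]; field_simp [hNpos.ne']
  have hstep : ∀ k : ℕ, a (k+1) - a k = b / N := by
    intro k; simp only [ha]; push_cast; field_simp; ring
  have hmono : ∀ k : ℕ, a k ≤ a (k+1) := by
    intro k
    have := hstep k
    have : (0:ℝ) < b / N := by positivity
    linarith [hstep k]
  have hbound : ∀ k ∈ Finset.range N, a k ∈ Set.Icc (0:ℝ) b ∧ a (k+1) ∈ Set.Icc (0:ℝ) b := by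
    intro k hk
    rw [Finset.mem_range] at hk
    have hk1 : (k:ℝ) + 1 ≤ N := by exact_mod_cast Nat.succ_le_of_lt hk
    constructor <;> constructor
    · positivity
    · rw [ha]; rw [div_le_iff₀ hNpos]; nlinarith [hk1]
    · positivity
    · simp only [ha]; push_cast; rw [div_le_iff₀ hNpos]; nlinarith [hk1]
  have hterm : ∀ k : ℕ, (b/N) * f (b*((k:ℝ)+1)/N) - ∫ x in (a k)..(a (k+1)), f x
      = ∫ x in (a k)..(a (k+1)), (f (a (k+1)) - f x) := by
    intro k
    rw [intervalIntegral.integral_sub (intervalIntegrable_const) (hint k),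
      intervalIntegral.integral_const, hstep k]
    have he : a (k+1) = b * ((k:ℝ)+1)/N := by simp only [ha]; push_cast; ring
    rw [he, smul_eq_mul]
  have htermbd : ∀ k ∈ Finset.range N,
      |∫ x in (a k)..(a (k+1)), (f (a (k+1)) - f x)| ≤ ε/(2*b) * (b/N) := by
    intro k hk
    obtain ⟨hak, hak1⟩ := hbound k hk
    have := intervalIntegral.norm_integral_le_of_norm_le_const
      (C := ε/(2*b)) (f := fun x => f (a (k+1)) - f x) (a := a k) (b := a (k+1)) ?_
    · rw [Real.norm_eq_abs] at this
      calc |∫ x in (a k)..(a (k+1)), (f (a (k+1)) - f x)| ≤ ε/(2*b) * |a (k+1) - a k| := this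
        _ = ε/(2*b) * (b/N) := by rw [hstep k, abs_of_pos (by positivity)]
    · intro x hx
      rw [Set.uIoc_of_le (hmono k)] at hx
      have hxmem : x ∈ Set.Icc (0:ℝ) b :=
        ⟨le_trans hak.1 hx.1.le, le_trans hx.2 hak1.2⟩
      rw [Real.norm_eq_abs]
      have hd : dist (a (k+1)) x < δ := by
        rw [Real.dist_eq, abs_of_nonneg (by linarith [hx.2])]
        calc a (k+1) - x ≤ a (k+1) - a k := by linarith [hx.1]
          _ = b / N := hstep k
          _ < δ := hsmall
      have := hUC _ hak1 _ hxmem hd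
      rw [Real.dist_eq] at this
      exact this.le
  rw [Real.dist_eq]
  have hdiff : (b / N) * ∑ k ∈ Finset.range N, f (b*((k:ℝ)+1)/N) - ∫ x in (0:ℝ)..b, f x
      = ∑ k ∈ Finset.range N, (∫ x in (a k)..(a (k+1)), (f (a (k+1)) - f x)) := by
    rw [show (∫ x in (0:ℝ)..b, f x) = ∫ x in (a 0)..(a N), f x by rw [ha0, haN],
      ← hsplit, Finset.mul_sum, ← Finset.sum_sub_distrib]
    apply Finset.sum_congr rfl
    intro k _
    exact hterm k
  rw [hdiff]
  calc |∑ k ∈ Finset.range N, ∫ x in (a k)..(a (k+1)), (f (a (k+1)) - f x)|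
      ≤ ∑ k ∈ Finset.range N, |∫ x in (a k)..(a (k+1)), (f (a (k+1)) - f x)| :=
        Finset.abs_sum_le_sum_abs _ _
    _ ≤ ∑ _k ∈ Finset.range N, ε/(2*b) * (b/N) := Finset.sum_le_sum htermbd
    _ = N * (ε/(2*b) * (b/N)) := by rw [Finset.sum_const, Finset.card_range, nsmul_eq_mul]
    _ = ε/2 := by field_simp
    _ < ε := by linarith

/-- Boundary weight asymptotics: for fixed `p > 0`, the normalized weight
`ρ_{D-1} = sin^p(πD/(D+1)) / Σ_{n<D} sin^p(π(n+1)/(D+1))` satisfies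
`ρ_{D-1} ~ π^{-1/2}·(π/(2μ))^{p+1}·Γ((2+p)/2)/Γ((1+p)/2)` as `μ = (D-1)/2 → ∞`;
in particular `ρ_{D-1} = Θ(μ^{-(p+1)})`. -/
theorem stmt_18 (p : ℝ) (hp : 0 < p)
    (ρtop : ℕ → ℝ)
    (hρtop : ∀ D : ℕ, 2 ≤ D → ρtop D =
      Real.sin (π * D / (D + 1)) ^ p /
        ∑ n ∈ Finset.range D, Real.sin (π * (n + 1) / (D + 1)) ^ p) :
    Tendsto (fun D : ℕ => ρtop D /
        (π ^ (-(1:ℝ)/2) * (π / (2 * (((D : ℝ) - 1) / 2))) ^ (p + 1) *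
          (Real.Gamma ((2 + p) / 2) / Real.Gamma ((1 + p) / 2))))
      atTop (nhds 1) ∧
    ∃ c C : ℝ, 0 < c ∧ 0 < C ∧ ∀ᶠ D : ℕ in atTop,
      c * (((D : ℝ) - 1) / 2) ^ (-(p + 1)) ≤ ρtop D ∧
        ρtop D ≤ C * (((D : ℝ) - 1) / 2) ^ (-(p + 1)) := by
  have hπ : (0:ℝ) < π := Real.pi_pos
  have hΓ1 : 0 < Real.Gamma ((1+p)/2) := Real.Gamma_pos_of_pos (by linarith)
  have hΓ2 : 0 < Real.Gamma ((2+p)/2) := Real.Gamma_pos_of_pos (by linarith)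
  set I : ℝ := Real.sqrt π * (Real.Gamma ((1+p)/2) / Real.Gamma ((2+p)/2)) with hIdef
  have hI : 0 < I := by
    apply mul_pos (Real.sqrt_pos.mpr hπ) (div_pos hΓ1 hΓ2)
  set S : ℕ → ℝ := fun D => ∑ n ∈ Finset.range D, Real.sin (π * (n + 1) / (D + 1)) ^ p
    with hSdef
  set T : ℕ → ℝ := fun D => π ^ (-(1:ℝ)/2) * (π / (2 * (((D : ℝ) - 1) / 2))) ^ (p + 1) *
      (Real.Gamma ((2 + p) / 2) / Real.Gamma ((1 + p) / 2)) with hTdef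
  -- Riemann sum limit
  have hR : Tendsto (fun D : ℕ => (π/((D:ℝ)+1)) * S D) atTop (nhds I) := by
    have h1 := (riemann (sinp_cont hp) hπ).comp (tendsto_add_atTop_nat 1)
    rw [I_val hp] at h1
    apply h1.congr
    intro D
    simp only [Function.comp]
    push_cast
    rw [Finset.sum_range_succ]
    have : π * ((D:ℝ) + 1) / ((D:ℝ) + 1) = π := by
      rw [mul_div_assoc, div_self (by positivity), mul_one]
    rw [this, Real.sin_pi, Real.zero_rpow hp.ne', add_zero]
  -- sin x / x → 1
  have hslope : Tendsto (fun y : ℝ => Real.sin y / y) (nhdsWithin 0 {(0:ℝ)}ᶜ) (nhds 1) := by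
    have h := (Real.hasDerivAt_sin 0)
    rw [hasDerivAt_iff_tendsto_slope] at h
    rw [Real.cos_zero] at h
    apply h.congr'
    filter_upwards with y
    simp [slope_def_field, div_eq_div_iff]
  have hxto : Tendsto (fun D : ℕ => π/((D:ℝ)+1)) atTop (nhdsWithin 0 {(0:ℝ)}ᶜ) := by
    apply tendsto_nhdsWithin_of_tendsto_nhds_of_eventually_within
    · have h2 : Tendsto (fun D : ℕ => ((D:ℝ)+1)) atTop atTop :=
        tendsto_atTop_add_const_right _ 1 tendsto_natCast_atTop_atTop
      have := h2.inv_tendsto_atTop.const_mul π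
      simpa [div_eq_mul_inv] using this
    · filter_upwards with D
      have : (0:ℝ) < π/((D:ℝ)+1) := by positivity
      simp [this.ne']
  have hrpow1 : ContinuousAt (fun y : ℝ => y ^ p) 1 :=
    Real.continuousAt_rpow_const 1 p (Or.inl one_ne_zero)
  have hrpow1' : ContinuousAt (fun y : ℝ => y ^ (p+1)) 1 :=
    Real.continuousAt_rpow_const 1 (p+1) (Or.inl one_ne_zero)
  have hX : Tendsto (fun D : ℕ =>
      (Real.sin (π/((D:ℝ)+1)) / (π/((D:ℝ)+1))) ^ p) atTop (nhds 1) := by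
    have := (hrpow1.tendsto.comp (hslope.comp hxto))
    rw [Real.one_rpow] at this
    exact this
  have hY : Tendsto (fun D : ℕ => I / ((π/((D:ℝ)+1)) * S D)) atTop (nhds 1) := by
    have := Tendsto.div (tendsto_const_nhds : Tendsto (fun _ : ℕ => I) atTop (nhds I)) hR hI.ne'
    rwa [div_self hI.ne'] at this
  have hZbase : Tendsto (fun D : ℕ => ((D:ℝ)-1)/((D:ℝ)+1)) atTop (nhds 1) := by
    have h2 : Tendsto (fun D : ℕ => ((D:ℝ)+1)) atTop atTop :=
      tendsto_atTop_add_const_right _ 1 tendsto_natCast_atTop_atTop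
    have h3 := h2.inv_tendsto_atTop.const_mul (2:ℝ)
    have h4 : Tendsto (fun D : ℕ => 1 - 2 * ((D:ℝ)+1)⁻¹) atTop (nhds 1) := by
      have := Tendsto.sub (tendsto_const_nhds : Tendsto (fun _ : ℕ => (1:ℝ)) atTop (nhds 1)) h3
      simpa using this
    apply h4.congr
    intro D
    have hne : ((D:ℝ)+1) ≠ 0 := by positivity
    field_simp
    ring
  have hZ : Tendsto (fun D : ℕ => (((D:ℝ)-1)/((D:ℝ)+1)) ^ (p+1)) atTop (nhds 1) := by
    have := hrpow1'.tendsto.comp hZbase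
    rw [Real.one_rpow] at this
    exact this
  -- pointwise identity
  have hSpos : ∀ D : ℕ, 2 ≤ D → 0 < S D := by
    intro D hD2
    apply Finset.sum_pos
    · intro n hn
      rw [Finset.mem_range] at hn
      have h1 : (0:ℝ) < π * ((n:ℝ) + 1) / ((D:ℝ) + 1) := by positivity
      have h2 : π * ((n:ℝ) + 1) / ((D:ℝ) + 1) < π := by
        rw [div_lt_iff₀ (by positivity)]
        have : ((n:ℝ) + 1) < (D:ℝ) + 1 := by
          have : (n:ℝ) < (D:ℝ) := by exact_mod_cast hn
          linarith
        nlinarith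
      exact Real.rpow_pos_of_pos (Real.sin_pos_of_pos_of_lt_pi h1 h2) p
    · exact ⟨0, Finset.mem_range.mpr (by omega)⟩
  have hmain : ∀ D : ℕ, 2 ≤ D → ρtop D / T D =
      (Real.sin (π/((D:ℝ)+1)) / (π/((D:ℝ)+1))) ^ p *
      (I / ((π/((D:ℝ)+1)) * S D)) *
      ((((D:ℝ)-1)/((D:ℝ)+1)) ^ (p+1)) := by
    intro D hD2
    have hd : (2:ℝ) ≤ (D:ℝ) := by exact_mod_cast hD2
    have hd1 : (0:ℝ) < (D:ℝ) + 1 := by linarith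
    have hdm : (0:ℝ) < (D:ℝ) - 1 := by linarith
    have hx0 : 0 < π/((D:ℝ)+1) := by positivity
    have hxπ : π/((D:ℝ)+1) < π := by
      rw [div_lt_iff₀ hd1]; nlinarith
    have hu : 0 < Real.sin (π/((D:ℝ)+1)) := Real.sin_pos_of_pos_of_lt_pi hx0 hxπ
    have hS := hSpos D hD2
    have hρ : ρtop D = Real.sin (π/((D:ℝ)+1)) ^ p / S D := by
      rw [hρtop D hD2]
      have harg : π * (D:ℝ) / ((D:ℝ)+1) = π - π/((D:ℝ)+1) := by
        field_simp; ring
      rw [harg, Real.sin_pi_sub]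
    have h2μ : 2 * (((D:ℝ)-1)/2) = (D:ℝ) - 1 := by ring
    rw [hρ, hTdef]
    simp only [h2μ]
    rw [show (-(1:ℝ)/2) = -(1/2 : ℝ) by norm_num,
      Real.rpow_neg hπ.le, ← Real.sqrt_eq_rpow,
      Real.div_rpow hπ.le hdm.le,
      Real.div_rpow hu.le hx0.le,
      Real.div_rpow hπ.le hd1.le,
      Real.div_rpow hdm.le hd1.le,
      Real.rpow_add_one (by positivity : ((D:ℝ)+1) ≠ 0),
      Real.rpow_add_one Real.pi_ne_zero,
      hIdef]
    have hsq : (0:ℝ) < Real.sqrt π := Real.sqrt_pos.mpr hπ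
    have hπp : (0:ℝ) < π ^ p := Real.rpow_pos_of_pos hπ p
    have hd1p : (0:ℝ) < ((D:ℝ)+1) ^ p := Real.rpow_pos_of_pos hd1 p
    have hdmp : (0:ℝ) < ((D:ℝ)-1) ^ (p+1) := Real.rpow_pos_of_pos hdm (p+1)
    field_simp
  have part1 : Tendsto (fun D : ℕ => ρtop D / T D) atTop (nhds 1) := by
    have hprod := (hX.mul hY).mul hZ
    rw [show (1:ℝ) * 1 * 1 = 1 by norm_num] at hprod
    apply hprod.congr'
    filter_upwards [eventually_ge_atTop 2] with D hD2
    exact (hmain D hD2).symm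
  refine ⟨part1, ?_⟩
  -- part 2
  set K : ℝ := π ^ (-(1:ℝ)/2) * (π/2) ^ (p+1) *
      (Real.Gamma ((2 + p) / 2) / Real.Gamma ((1 + p) / 2)) with hKdef
  have hK : 0 < K := by
    apply mul_pos (mul_pos (Real.rpow_pos_of_pos hπ _) (Real.rpow_pos_of_pos (by linarith) _))
      (div_pos hΓ2 hΓ1)
  have hT : ∀ D : ℕ, 2 ≤ D → T D = K * (((D:ℝ)-1)/2) ^ (-(p+1)) := by
    intro D hD2
    have hd : (2:ℝ) ≤ (D:ℝ) := by exact_mod_cast hD2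
    have hμ : (0:ℝ) < ((D:ℝ)-1)/2 := by linarith
    simp only [hTdef, hKdef]
    have harg : π / (2 * (((D:ℝ)-1)/2)) = (π/2) / (((D:ℝ)-1)/2) := by
      field_simp
    rw [harg, Real.div_rpow (by positivity) hμ.le, Real.rpow_neg hμ.le]
    ring
  have hTpos : ∀ D : ℕ, 2 ≤ D → 0 < T D := by
    intro D hD2
    rw [hT D hD2]
    have hd : (2:ℝ) ≤ (D:ℝ) := by exact_mod_cast hD2
    have hμ : (0:ℝ) < ((D:ℝ)-1)/2 := by linarith
    exact mul_pos hK (Real.rpow_pos_of_pos hμ _)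
  refine ⟨K/2, 2*K, by positivity, by positivity, ?_⟩
  have hball := part1 (Ioo_mem_nhds (show (1/2:ℝ) < 1 by norm_num)
    (show (1:ℝ) < 3/2 by norm_num))
  filter_upwards [hball, eventually_ge_atTop 2] with D hD hD2
  have hd : (2:ℝ) ≤ (D:ℝ) := by exact_mod_cast hD2
  have hμ : (0:ℝ) < ((D:ℝ)-1)/2 := by linarith
  have hμp : 0 < (((D:ℝ)-1)/2) ^ (-(p+1)) := Real.rpow_pos_of_pos hμ _
  have hTD := hTpos D hD2
  obtain ⟨hlo, hhi⟩ : ρtop D / T D ∈ Set.Ioo (1/2 : ℝ) (3/2) := hD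
  have hρeq : ρtop D = (ρtop D / T D) * T D := by field_simp
  have hTeq := hT D hD2
  constructor
  · calc K/2 * (((D:ℝ)-1)/2) ^ (-(p+1)) = (1/2) * T D := by rw [hTeq]; ring
      _ ≤ (ρtop D / T D) * T D := mul_le_mul_of_nonneg_right hlo.le hTD.le
      _ = ρtop D := hρeq.symm
  · calc ρtop D = (ρtop D / T D) * T D := hρeq
      _ ≤ (3/2) * T D := mul_le_mul_of_nonneg_right hhi.le hTD.le
      _ ≤ 2*K * (((D:ℝ)-1)/2) ^ (-(p+1)) := by
          rw [hTeq]
          nlinarith [mul_pos hK hμp]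
end
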